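/- arXiv:1306.0842 — 4 statements merged into one kernel-verified Lean document; each statement's English description precedes it below -/
import Mathlib

section
/- Let H be a Hilbert space, μ ∈ H the mean of an H-valued random variable with finite second moment, μ̂ the empirical mean of n i.i.d. samples, and Δ = E[‖μ̂ − μ‖²]. For f* ∈ H and α ∈ ℝ, define the shrinkage estimator μ̂_α = α f* + (1−α) μ̂ and its risk Δ_α = E[‖μ̂_α − μ‖²]. Then Δ_α = (Δ + ‖f* − μ‖²)(α − Δ/(Δ + ‖f* − μ‖²))² + Δ − Δ²/(Δ + ‖f* − μ‖²), provided Δ + ‖f* − μ‖² > 0. -/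
open MeasureTheory ProbabilityTheory
open scoped RealInnerProductSpace

/-- Risk decomposition of the shrinkage estimator `μ̂_α = α f* + (1-α) μ̂`:
`Δ_α = (Δ + ‖f*-μ‖²)(α - Δ/(Δ+‖f*-μ‖²))² + Δ - Δ²/(Δ+‖f*-μ‖²)`. -/
theorem shrinkage_risk_decomposition
    {Ω : Type*} [MeasurableSpace Ω] (P : Measure Ω) [IsProbabilityMeasure P]
    {H : Type*} [NormedAddCommGroup H] [InnerProductSpace ℝ H] [CompleteSpace H]
    [MeasurableSpace H] [BorelSpace H] [SecondCountableTopology H]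
    (n : ℕ) (hn : 0 < n)
    (X : Ω → H) (Xs : Fin n → Ω → H)
    (hmeas : ∀ i, Measurable (Xs i))
    (hX2 : MemLp X 2 P)
    (hindep : iIndepFun Xs P)
    (hident : ∀ i, Measure.map (Xs i) P = Measure.map X P)
    (μ : H) (hμ : μ = ∫ ω, X ω ∂P)
    (emp : Ω → H) (hemp : emp = fun ω => (n : ℝ)⁻¹ • (∑ i, Xs i ω))
    (Δ : ℝ) (hΔ : Δ = ∫ ω, ‖emp ω - μ‖ ^ 2 ∂P)
    (fstar : H) (α : ℝ)
    (Δα : ℝ) (hΔα : Δα = ∫ ω, ‖α • fstar + (1 - α) • emp ω - μ‖ ^ 2 ∂P)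
    (hpos : 0 < Δ + ‖fstar - μ‖ ^ 2) :
    Δα = (Δ + ‖fstar - μ‖ ^ 2) * (α - Δ / (Δ + ‖fstar - μ‖ ^ 2)) ^ 2
          + Δ - Δ ^ 2 / (Δ + ‖fstar - μ‖ ^ 2) := by
  have hXs2 : ∀ i, MemLp (Xs i) 2 P := by
    intro i
    have h1 : MemLp id 2 (Measure.map X P) := by
      rw [memLp_map_measure_iff aestronglyMeasurable_id
        hX2.aestronglyMeasurable.aemeasurable]
      simpa using hX2
    rw [← hident i] at h1
    have := (memLp_map_measure_iff aestronglyMeasurable_id (hmeas i).aemeasurable).mp h1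
    simpa using this
  have hint : ∀ i, ∫ ω, Xs i ω ∂P = μ := by
    intro i
    have h1 : ∫ ω, Xs i ω ∂P = ∫ x, x ∂(Measure.map (Xs i) P) :=
      (integral_map (hmeas i).aemeasurable aestronglyMeasurable_id).symm
    rw [h1, hident i, hμ]
    exact integral_map hX2.aestronglyMeasurable.aemeasurable aestronglyMeasurable_id
  have hemp2 : MemLp emp 2 P := by
    rw [hemp]
    have h := (memLp_finset_sum' Finset.univ (fun i _ => hXs2 i)).const_smul ((n:ℝ)⁻¹)
    simpa [Pi.smul_def] using h
  have hg2 : MemLp (fun ω => emp ω - μ) 2 P := hemp2.sub (memLp_const μ)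
  have hgint : Integrable (fun ω => emp ω - μ) P := hg2.integrable one_le_two
  have hempint : ∫ ω, emp ω ∂P = μ := by
    rw [hemp]
    simp only
    rw [integral_smul, integral_finset_sum _ (fun i _ => (hXs2 i).integrable one_le_two)]
    simp only [hint, Finset.sum_const, Finset.card_fin]
    rw [← Nat.cast_smul_eq_nsmul ℝ, smul_smul, inv_mul_cancel₀ (by positivity : (n:ℝ) ≠ 0),
      one_smul]
  have hcross : ∫ ω, ⟪fstar - μ, emp ω - μ⟫ ∂P = 0 := by
    rw [integral_inner hgint]
    have h0 : ∫ ω, (emp ω - μ) ∂P = 0 := by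
      rw [integral_sub (hemp2.integrable one_le_two) (integrable_const μ), hempint]
      simp
    rw [h0, inner_zero_right]
  have hsqint : Integrable (fun ω => ‖emp ω - μ‖ ^ 2) P := by
    have := hg2.integrable_norm_rpow two_ne_zero ENNReal.ofNat_ne_top
    have h2 : (ENNReal.toReal 2) = (2 : ℝ) := by simp
    simpa [h2, Real.rpow_natCast] using this
  have key : Δα = α^2 * ‖fstar - μ‖^2 + (1-α)^2 * Δ := by
    have hrw : ∀ ω, ‖α • fstar + (1 - α) • emp ω - μ‖ ^ 2
        = α^2 * ‖fstar - μ‖^2 + (2*α*(1-α)) * ⟪fstar - μ, emp ω - μ⟫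
          + (1-α)^2 * ‖emp ω - μ‖^2 := by
      intro ω
      have h1 : α • fstar + (1 - α) • emp ω - μ
          = α • (fstar - μ) + (1 - α) • (emp ω - μ) := by
        module
      rw [h1, norm_add_sq_real, norm_smul, norm_smul, real_inner_smul_left,
        real_inner_smul_right]
      simp only [Real.norm_eq_abs, mul_pow, sq_abs]
      ring
    rw [hΔα]
    simp_rw [hrw]
    have hA : Integrable (fun ω => α ^ 2 * ‖fstar - μ‖ ^ 2
        + 2 * α * (1 - α) * ⟪fstar - μ, emp ω - μ⟫) P :=
      (integrable_const _).add ((hgint.const_inner _).const_mul _)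
    have hB : Integrable (fun ω => (1 - α) ^ 2 * ‖emp ω - μ‖ ^ 2) P := hsqint.const_mul _
    rw [integral_add hA hB, integral_add (integrable_const _)
        ((hgint.const_inner _).const_mul _),
      integral_const_mul, integral_const_mul, integral_const_mul, hcross, integral_const]
    simp [hΔ]
  rw [key]
  field_simp
  ring
end

section
/- With notation as above, if Δ > 0 then the choice α* = Δ/(Δ + ‖f* − μ‖²) satisfies 0 < α* ≤ 1 and gives Δ_{α*} − Δ = −Δ²/(Δ + ‖f* − μ‖²) < 0; i.e., the shrinkage estimator μ̂_{α*} = α* f* + (1−α*) μ̂ has strictly smaller risk than the empirical mean μ̂. -/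
open MeasureTheory ProbabilityTheory
open scoped RealInnerProductSpace

/-- If `Δ > 0`, the choice `α* = Δ/(Δ + ‖f*-μ‖²)` satisfies `0 < α* ≤ 1` and the
shrinkage estimator `μ̂_{α*} = α* f* + (1-α*) μ̂` has strictly smaller risk than
the empirical mean: `Δ_{α*} - Δ = -Δ²/(Δ + ‖f*-μ‖²) < 0`. -/
theorem shrinkage_strictly_improves
    {Ω : Type*} [MeasurableSpace Ω] (P : Measure Ω) [IsProbabilityMeasure P]
    {H : Type*} [NormedAddCommGroup H] [InnerProductSpace ℝ H] [CompleteSpace H]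
    [MeasurableSpace H] [BorelSpace H] [SecondCountableTopology H]
    (n : ℕ) (hn : 0 < n)
    (X : Ω → H) (Xs : Fin n → Ω → H)
    (hmeas : ∀ i, Measurable (Xs i))
    (hX2 : MemLp X 2 P)
    (hindep : iIndepFun Xs P)
    (hident : ∀ i, Measure.map (Xs i) P = Measure.map X P)
    (μ : H) (hμ : μ = ∫ ω, X ω ∂P)
    (emp : Ω → H) (hemp : emp = fun ω => (n : ℝ)⁻¹ • (∑ i, Xs i ω))
    (Δ : ℝ) (hΔ : Δ = ∫ ω, ‖emp ω - μ‖ ^ 2 ∂P)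
    (hΔpos : 0 < Δ)
    (fstar : H)
    (αstar : ℝ) (hαstar : αstar = Δ / (Δ + ‖fstar - μ‖ ^ 2))
    (Δαstar : ℝ)
    (hΔαstar : Δαstar = ∫ ω, ‖αstar • fstar + (1 - αstar) • emp ω - μ‖ ^ 2 ∂P) :
    (0 < αstar ∧ αstar ≤ 1) ∧
      Δαstar - Δ = -(Δ ^ 2 / (Δ + ‖fstar - μ‖ ^ 2)) ∧
      Δαstar < Δ := by
  set B : ℝ := ‖fstar - μ‖ ^ 2 with hB
  have hBnn : 0 ≤ B := by positivity
  have hSpos : 0 < Δ + B := by linarith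
  have hα1 : 0 < αstar := hαstar ▸ div_pos hΔpos hSpos
  have hα2 : αstar ≤ 1 := by
    rw [hαstar, div_le_one hSpos]; linarith
  -- measurability of X
  have hXaem : AEMeasurable X P := hX2.aestronglyMeasurable.aemeasurable
  -- each Xs i is in L²
  have hXsL2 : ∀ i, MemLp (Xs i) 2 P := by
    intro i
    have h1 : MemLp (id : H → H) 2 (Measure.map X P) :=
      (memLp_map_measure_iff aestronglyMeasurable_id hXaem).2 hX2
    have h2 : MemLp (id : H → H) 2 (Measure.map (Xs i) P) := by rw [hident i]; exact h1
    exact (memLp_map_measure_iff aestronglyMeasurable_id (hmeas i).aemeasurable).1 h2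
  -- emp ∈ L²
  have hempL2 : MemLp emp 2 P := by
    rw [hemp]
    have hsum : MemLp (∑ i, Xs i) 2 P := memLp_finset_sum' _ (fun i _ => hXsL2 i)
    have h := hsum.const_smul ((n : ℝ)⁻¹)
    have heqf : ((n : ℝ)⁻¹ • ∑ i, Xs i) = fun ω => (n : ℝ)⁻¹ • ∑ i, Xs i ω := by
      ext ω; simp [Finset.sum_apply]
    rwa [heqf] at h
  have hdiffL2 : MemLp (fun ω => emp ω - μ) 2 P := hempL2.sub (memLp_const μ)
  have hdiffInt : Integrable (fun ω => emp ω - μ) P :=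
    hdiffL2.integrable (by norm_num)
  -- ∫ emp = μ
  have hXsmean : ∀ i, ∫ ω, Xs i ω ∂P = μ := by
    intro i
    have h1 : ∫ ω, Xs i ω ∂P = ∫ x, id x ∂(Measure.map (Xs i) P) :=
      (integral_map (hmeas i).aemeasurable aestronglyMeasurable_id).symm
    have h2 : ∫ x, id x ∂(Measure.map X P) = ∫ ω, X ω ∂P :=
      integral_map hXaem aestronglyMeasurable_id
    rw [h1, hident i, h2, ← hμ]
  have hempmean : ∫ ω, emp ω ∂P = μ := by
    rw [hemp]
    rw [integral_smul]
    rw [integral_finset_sum _ (fun i _ => (hXsL2 i).integrable (by norm_num))]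
    simp only [hXsmean, Finset.sum_const, Finset.card_univ, Fintype.card_fin]
    rw [← Nat.cast_smul_eq_nsmul ℝ, smul_smul]
    rw [inv_mul_cancel₀ (by exact_mod_cast hn.ne')]
    simp
  have hmean0 : ∫ ω, (emp ω - μ) ∂P = 0 := by
    rw [integral_sub (hempL2.integrable (by norm_num)) (integrable_const μ), hempmean,
      integral_const]
    simp
  -- pointwise expansion
  set v : H := fstar - μ with hv
  have hpt : ∀ ω, ‖αstar • fstar + (1 - αstar) • emp ω - μ‖ ^ 2
      = αstar ^ 2 * B + (2 * αstar * (1 - αstar)) * ⟪v, emp ω - μ⟫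
        + (1 - αstar) ^ 2 * ‖emp ω - μ‖ ^ 2 := by
    intro ω
    have hrw : αstar • fstar + (1 - αstar) • emp ω - μ
        = αstar • v + (1 - αstar) • (emp ω - μ) := by
      rw [hv]; module
    rw [hrw, norm_add_sq_real, norm_smul, norm_smul, real_inner_smul_left,
      real_inner_smul_right]
    rw [mul_pow, mul_pow, Real.norm_eq_abs, Real.norm_eq_abs, sq_abs, sq_abs, hB]
    ring
  -- integrability of each piece
  have hI2 : Integrable (fun ω => ⟪v, emp ω - μ⟫) P := hdiffInt.const_inner v
  have hI3 : Integrable (fun ω => ‖emp ω - μ‖ ^ 2) P :=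
    (hdiffL2.norm).integrable_sq
  -- compute Δαstar
  have hkey : Δαstar = αstar ^ 2 * B + (1 - αstar) ^ 2 * Δ := by
    rw [hΔαstar]
    have : (fun ω => ‖αstar • fstar + (1 - αstar) • emp ω - μ‖ ^ 2)
        = fun ω => αstar ^ 2 * B + (2 * αstar * (1 - αstar)) * ⟪v, emp ω - μ⟫
          + (1 - αstar) ^ 2 * ‖emp ω - μ‖ ^ 2 := funext hpt
    rw [this]
    have hIa : Integrable (fun ω => αstar ^ 2 * B
        + (2 * αstar * (1 - αstar)) * ⟪v, emp ω - μ⟫) P :=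
      (integrable_const _).add (hI2.const_mul _)
    have hIb : Integrable (fun ω => (1 - αstar) ^ 2 * ‖emp ω - μ‖ ^ 2) P := hI3.const_mul _
    rw [integral_add hIa hIb]
    rw [integral_add (integrable_const _) (hI2.const_mul _)]
    rw [integral_const, integral_const_mul, integral_const_mul, integral_inner hdiffInt,
      hmean0, inner_zero_right]
    simp [hΔ]
  have heq : Δαstar - Δ = -(Δ ^ 2 / (Δ + B)) := by
    rw [hkey, hαstar]
    field_simp
    ring
  refine ⟨⟨hα1, hα2⟩, heq, ?_⟩
  have : -(Δ ^ 2 / (Δ + B)) < 0 := by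
    have := div_pos (pow_pos hΔpos 2) hSpos
    linarith
  linarith [heq ▸ this]
end

section
/- Let x₁,…,xₙ ∈ H (n ≥ 2), μ̂ = (1/n)∑ᵢxᵢ, and for 0 ≤ α < 1 let μ̂^{(−i)} = (1/(n−1))∑_{j≠i}xⱼ. Then the leave-one-out score LOOCV(α) = (1/n)∑ᵢ‖(1−α)μ̂^{(−i)} − xᵢ‖² equals (1/(n−1)²)[(−n² + α²n² + 2αn − 2α²n)ρ + (n² − 2αn + α²)ϱ], where ρ = (1/n²)∑_{i,j}⟨xᵢ,xⱼ⟩ and ϱ = (1/n)∑ᵢ‖xᵢ‖². -/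
open scoped RealInnerProductSpace

/-- Closed form of the S-KMSE leave-one-out cross-validation score:
`LOOCV(α) = (1/(n-1)²)[(-n² + α²n² + 2αn - 2α²n)ρ + (n² - 2αn + α²)ϱ]`
with `ρ = (1/n²)∑ᵢⱼ⟨xᵢ,xⱼ⟩` and `ϱ = (1/n)∑ᵢ‖xᵢ‖²`. -/
theorem skmse_loocv_closed_form
    {H : Type*} [NormedAddCommGroup H] [InnerProductSpace ℝ H]
    (n : ℕ) (hn : 2 ≤ n) (x : Fin n → H) (α : ℝ)
    (μhat : H) (hμhat : μhat = (n : ℝ)⁻¹ • ∑ i, x i)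
    (μloo : Fin n → H)
    (hμloo : μloo = fun i => ((n : ℝ) - 1)⁻¹ • ∑ j ∈ Finset.univ.erase i, x j)
    (ρ ϱ : ℝ)
    (hρ : ρ = (n : ℝ)⁻¹ ^ 2 * ∑ i, ∑ j, ⟪x i, x j⟫)
    (hϱ : ϱ = (n : ℝ)⁻¹ * ∑ i, ‖x i‖ ^ 2) :
    (n : ℝ)⁻¹ * ∑ i, ‖(1 - α) • μloo i - x i‖ ^ 2
      = ((n : ℝ) - 1)⁻¹ ^ 2 *
          ((-(n : ℝ) ^ 2 + α ^ 2 * (n : ℝ) ^ 2 + 2 * α * n - 2 * α ^ 2 * n) * ρ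
            + ((n : ℝ) ^ 2 - 2 * α * n + α ^ 2) * ϱ) := by
  have h2 : (2:ℝ) ≤ (n:ℝ) := by exact_mod_cast hn
  have hn0 : (n:ℝ) ≠ 0 := by linarith
  have hn1 : (n:ℝ) - 1 ≠ 0 := by linarith
  subst hμloo hρ hϱ
  set S : H := ∑ i, x i with hS
  have herase : ∀ i : Fin n, ∑ j ∈ Finset.univ.erase i, x j = S - x i := by
    intro i
    rw [hS, ← Finset.sum_erase_add Finset.univ x (Finset.mem_univ i)]
    abel
  have key : ∀ i : Fin n,
      ‖(1-α) • (((n:ℝ)-1)⁻¹ • ∑ j ∈ Finset.univ.erase i, x j) - x i‖^2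
      = ((n:ℝ)-1)⁻¹^2 * ((1-α)^2 * ‖S‖^2
          - 2*(1-α)*((n:ℝ)-α) * ⟪S, x i⟫ + ((n:ℝ)-α)^2 * ‖x i‖^2) := by
    intro i
    have h1 : (1-α) • (((n:ℝ)-1)⁻¹ • ∑ j ∈ Finset.univ.erase i, x j) - x i
        = ((n:ℝ)-1)⁻¹ • ((1-α) • S - ((n:ℝ)-α) • x i) := by
      rw [herase i]
      match_scalars <;> field_simp <;> ring
    rw [h1, norm_smul, mul_pow, @norm_sub_sq_real H,
      norm_smul, norm_smul, real_inner_smul_left, real_inner_smul_right,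
      mul_pow, mul_pow]
    simp only [Real.norm_eq_abs, sq_abs]
    ring
  simp only [key]
  rw [Finset.mul_sum]
  simp only [Finset.sum_add_distrib, Finset.sum_sub_distrib, ← Finset.mul_sum,
    Finset.sum_const, Finset.card_univ, Fintype.card_fin, nsmul_eq_mul]
  have hSx : ∑ i, ⟪S, x i⟫ = ∑ i, ∑ j, ⟪x i, x j⟫ := by
    rw [← inner_sum, hS, sum_inner]
    simp [inner_sum]
  have hSS : ‖S‖^2 = ∑ i, ∑ j, ⟪x i, x j⟫ := by
    rw [← real_inner_self_eq_norm_sq, hS, sum_inner]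
    simp [inner_sum]
  rw [hSx, hSS]
  field_simp
  ring
end

section
/- With ρ = (1/n²)∑_{i,j}⟨xᵢ,xⱼ⟩ and ϱ = (1/n)∑ᵢ‖xᵢ‖² as above, if (n−2)ρ + ϱ/n > 0 then the quadratic α ↦ LOOCV(α) is minimized at α* = (ϱ − ρ)/((n−2)ρ + ϱ/n); equivalently the optimal shrinkage parameter under α = λ/(1+λ) is λ* = (ϱ − ρ)/((n−1)ρ + ϱ/n − ϱ). -/
open scoped RealInnerProductSpace

/-- If `(n-2)ρ + ϱ/n > 0`, the LOOCV score is minimized at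
`α* = (ϱ-ρ)/((n-2)ρ + ϱ/n)`; equivalently, under `α = λ/(1+λ)`, the optimal
shrinkage parameter is `λ* = (ϱ-ρ)/((n-1)ρ + ϱ/n - ϱ)`. -/
theorem skmse_loocv_minimizer
    {H : Type*} [NormedAddCommGroup H] [InnerProductSpace ℝ H]
    (n : ℕ) (hn : 2 ≤ n) (x : Fin n → H)
    (μloo : Fin n → H)
    (hμloo : μloo = fun i => ((n : ℝ) - 1)⁻¹ • ∑ j ∈ Finset.univ.erase i, x j)
    (LOOCV : ℝ → ℝ)
    (hLOOCV : LOOCV = fun α => (n : ℝ)⁻¹ * ∑ i, ‖(1 - α) • μloo i - x i‖ ^ 2)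
    (ρ ϱ : ℝ)
    (hρ : ρ = (n : ℝ)⁻¹ ^ 2 * ∑ i, ∑ j, ⟪x i, x j⟫)
    (hϱ : ϱ = (n : ℝ)⁻¹ * ∑ i, ‖x i‖ ^ 2)
    (hden : 0 < ((n : ℝ) - 2) * ρ + ϱ / n)
    (αstar : ℝ) (hαstar : αstar = (ϱ - ρ) / (((n : ℝ) - 2) * ρ + ϱ / n))
    (lamstar : ℝ)
    (hlamstar : lamstar = (ϱ - ρ) / (((n : ℝ) - 1) * ρ + ϱ / n - ϱ)) :
    (∀ α : ℝ, LOOCV αstar ≤ LOOCV α) ∧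
      (((n : ℝ) - 1) * ρ + ϱ / n - ϱ ≠ 0 → αstar = lamstar / (1 + lamstar)) := by
  have hn2 : (2:ℝ) ≤ (n:ℝ) := by exact_mod_cast hn
  have hn0 : (0:ℝ) < (n:ℝ) := by linarith
  have hnne : (n:ℝ) ≠ 0 := ne_of_gt hn0
  have hn1 : (n:ℝ) - 1 ≠ 0 := by intro h; nlinarith
  set s : H := ∑ j, x j with hs
  set P : ℝ := ‖s‖ ^ 2 with hP
  set T : ℝ := ∑ i, ‖x i‖ ^ 2 with hT
  have hinner : ∑ i, ⟪s, x i⟫ = P := by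
    rw [hP, ← real_inner_self_eq_norm_sq, hs, inner_sum]
  have hρ' : ρ = P / (n:ℝ) ^ 2 := by
    rw [hρ]
    have h1 : ∑ i, ∑ j, ⟪x i, x j⟫ = P := by
      rw [hP, ← real_inner_self_eq_norm_sq, hs, sum_inner]
      exact Finset.sum_congr rfl fun i _ => by rw [inner_sum]
    rw [h1]; field_simp
  have hϱ' : ϱ = T / (n:ℝ) := by rw [hϱ, hT]; field_simp
  have hμ : ∀ i : Fin n, μloo i = ((n : ℝ) - 1)⁻¹ • (s - x i) := by
    intro i
    rw [hμloo]
    simp only [hs]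
    rw [Finset.sum_erase_eq_sub (Finset.mem_univ i)]
  have key : ∀ α : ℝ, LOOCV α = (n:ℝ)⁻¹ *
      (((1-α)*((n:ℝ)-1)⁻¹)^2 * (((n:ℝ)-2) * P + T)
        - 2*((1-α)*((n:ℝ)-1)⁻¹) * (P - T) + T) := by
    intro α
    rw [hLOOCV]
    simp only
    congr 1
    set c : ℝ := (1-α)*((n:ℝ)-1)⁻¹ with hc
    have hterm : ∀ i : Fin n, ‖(1 - α) • μloo i - x i‖ ^ 2 =
        c^2 * P - (2*c^2 + 2*c) * ⟪s, x i⟫ + (c^2 + 2*c + 1) * ‖x i‖^2 := by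
      intro i
      rw [hμ i, smul_smul, ← hc]
      rw [@norm_sub_sq_real]
      rw [norm_smul, real_inner_smul_left, inner_sub_left,
        real_inner_self_eq_norm_sq]
      simp only [Real.norm_eq_abs, mul_pow, sq_abs]
      rw [@norm_sub_sq_real, ← hP]
      ring
    rw [Finset.sum_congr rfl fun i _ => hterm i]
    rw [Finset.sum_add_distrib, Finset.sum_sub_distrib, Finset.sum_const,
      ← Finset.mul_sum, ← Finset.mul_sum, hinner, ← hT]
    simp only [Finset.card_univ, Fintype.card_fin, nsmul_eq_mul]
    ring
  have hdform : ((n:ℝ)-2) * ρ + ϱ / n = (((n:ℝ)-2) * P + T) / (n:ℝ)^2 := by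
    rw [hρ', hϱ']; field_simp
  have hE : 0 < ((n:ℝ)-2) * P + T := by
    rw [hdform] at hden
    have h3 := mul_pos hden (pow_pos hn0 2)
    rwa [div_mul_cancel₀ _ (pow_ne_zero 2 hnne)] at h3
  have hαstar' : αstar = ((n:ℝ)*T - P) / (((n:ℝ)-2)*P + T) := by
    rw [hαstar, hdform, hρ', hϱ']
    rw [div_eq_div_iff (by rw [← hdform]; exact ne_of_gt hden) (ne_of_gt hE)]
    field_simp
  constructor
  · intro α
    have hdiff : LOOCV α - LOOCV αstar =
        (((n:ℝ)-2)*P + T) / ((n:ℝ)*((n:ℝ)-1)^2) * (α - αstar)^2 := by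
      rw [key α, key αstar, hαstar']
      field_simp
      ring
    have hpos : 0 ≤ (((n:ℝ)-2)*P + T) / ((n:ℝ)*((n:ℝ)-1)^2) * (α - αstar)^2 := by
      apply mul_nonneg
      · apply div_nonneg (le_of_lt hE)
        have : ((n:ℝ)-1)^2 > 0 := by positivity
        positivity
      · positivity
    linarith [hdiff ▸ hpos]
  · intro hD2
    have hD1 : ((n:ℝ)-2) * ρ + ϱ / n ≠ 0 := ne_of_gt hden
    rw [hαstar, hlamstar]
    have hsum : 1 + (ϱ - ρ) / (((n:ℝ)-1)*ρ + ϱ/n - ϱ) =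
        (((n:ℝ)-2)*ρ + ϱ/n) / (((n:ℝ)-1)*ρ + ϱ/n - ϱ) := by
      rw [add_div' _ _ _ hD2]
      congr 1
      ring
    rw [hsum, div_div_div_cancel_right₀ hD2]
end
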